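/- Let γ > 1, K > 0, ξ ∈ ℝ, T ∈ (0,∞], and let a : [0,T) → ℝ be twice continuously differentiable with a(t) > 0 for all t and a''(t) = ξ / a(t)^γ for all t, let b : [0,T) → ℝ be continuously differentiable and W : [0,T) → ℝ any function. Define R(x,t) = W(t) − ((γ−1)/(Kγ))[b'(t) + b(t)a'(t)/a(t)] x − ((γ−1)ξ/(2Kγ a(t)^{γ+1})) x² and u(x,t) = (a'(t)/a(t)) x + b(t). Then for every (x,t) ∈ ℝ × [0,T), the momentum balance in the form ∂_t u(x,t) + u(x,t) ∂_x u(x,t) + (Kγ/(γ−1)) ∂_x R(x,t) = 0 holds; in particular, wherever R > 0 and ρ = R^{1/(γ−1)}, the momentum equation ρ(u_t + u u_x) + ∂_x(Kρ^γ) = 0 of the compressible Euler equations is satisfied. -/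

import Mathlib

open Real Set Filter Topology
open scoped ENNReal

/-- With `a` solving the Emden equation and `u(x,t) = (a'(t)/a(t))x + b(t)`,
the quadratic profile `R` (playing the role of `ρ^{γ-1}`) satisfies the momentum
balance `u_t + u u_x + (Kγ/(γ-1)) ∂_x R = 0` everywhere; in particular, wherever
`R > 0` and `ρ = R^{1/(γ-1)}`, the momentum equation
`ρ(u_t + u u_x) + ∂_x(Kρ^γ) = 0` of the compressible Euler equations holds. -/
theorem momentum_balance_of_emden
    (γ K ξ : ℝ) (hγ : 1 < γ) (hK : 0 < K)
    (T : ℝ≥0∞) (hT : 0 < T)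
    (D : Set ℝ) (hD : D = {t : ℝ | 0 ≤ t ∧ ENNReal.ofReal t < T})
    (a a' a'' b b' W : ℝ → ℝ)
    (ha : ∀ t ∈ D, HasDerivAt a (a' t) t)
    (ha' : ∀ t ∈ D, HasDerivAt a' (a'' t) t)
    (ha''c : ContinuousOn a'' D)
    (hb : ∀ t ∈ D, HasDerivAt b (b' t) t)
    (hb'c : ContinuousOn b' D)
    (hapos : ∀ t ∈ D, 0 < a t)
    (hEmden : ∀ t ∈ D, a'' t = ξ / a t ^ γ)
    (R u ρ : ℝ → ℝ → ℝ)
    (hR : R = fun x t => W t - ((γ - 1) / (K * γ)) * (b' t + b t * (a' t / a t)) * x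
        - ((γ - 1) * ξ / (2 * K * γ * a t ^ (γ + 1))) * x ^ 2)
    (hu : u = fun x t => (a' t / a t) * x + b t)
    (hρ : ρ = fun x t => R x t ^ ((1 : ℝ) / (γ - 1))) :
    (∀ x : ℝ, ∀ t ∈ D,
      deriv (fun τ => u x τ) t + u x t * deriv (fun y => u y t) x
        + (K * γ / (γ - 1)) * deriv (fun y => R y t) x = 0) ∧
    (∀ x : ℝ, ∀ t ∈ D, 0 < R x t →
      ρ x t * (deriv (fun τ => u x τ) t + u x t * deriv (fun y => u y t) x)
        + deriv (fun y => K * ρ y t ^ γ) x = 0) := by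
  have hγ0 : γ ≠ 0 := by linarith
  have hγ1 : γ - 1 ≠ 0 := by linarith
  have hK0 : K ≠ 0 := ne_of_gt hK
  -- derivative of u in time
  have hut : ∀ x : ℝ, ∀ t ∈ D,
      deriv (fun τ => u x τ) t
        = (a'' t * a t - a' t * a' t) / (a t) ^ 2 * x + b' t := by
    intro x t ht
    have hA : a t ≠ 0 := ne_of_gt (hapos t ht)
    have h1 : HasDerivAt (fun τ => a' τ / a τ)
        ((a'' t * a t - a' t * a' t) / (a t) ^ 2) t :=
      (ha' t ht).div (ha t ht) hA
    have h2 : HasDerivAt (fun τ => u x τ)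
        ((a'' t * a t - a' t * a' t) / (a t) ^ 2 * x + b' t) t := by
      rw [hu]
      exact (h1.mul_const x).add (hb t ht)
    exact h2.deriv
  -- derivative of u in space
  have hux : ∀ x : ℝ, ∀ t : ℝ, deriv (fun y => u y t) x = a' t / a t := by
    intro x t
    have h2 : HasDerivAt (fun y => u y t) (a' t / a t) x := by
      rw [hu]
      simpa using ((hasDerivAt_id x).const_mul (a' t / a t)).add_const (b t)
    exact h2.deriv
  -- derivative of R in space
  have hRxd : ∀ x : ℝ, ∀ t : ℝ, HasDerivAt (fun y => R y t)
      (-((γ - 1) / (K * γ)) * (b' t + b t * (a' t / a t))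
        - ((γ - 1) * ξ / (2 * K * γ * a t ^ (γ + 1))) * (2 * x)) x := by
    intro x t
    rw [hR]
    have h1 : HasDerivAt (fun y : ℝ =>
        W t - ((γ - 1) / (K * γ)) * (b' t + b t * (a' t / a t)) * y)
        (-(((γ - 1) / (K * γ)) * (b' t + b t * (a' t / a t)))) x := by
      simpa [Pi.sub_def] using (hasDerivAt_const x (W t)).sub
        ((hasDerivAt_id x).const_mul (((γ - 1) / (K * γ)) * (b' t + b t * (a' t / a t))))
    have h2 : HasDerivAt (fun y : ℝ =>
        ((γ - 1) * ξ / (2 * K * γ * a t ^ (γ + 1))) * y ^ 2)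
        (((γ - 1) * ξ / (2 * K * γ * a t ^ (γ + 1))) * (2 * x)) x := by
      have := (hasDerivAt_pow 2 x).const_mul ((γ - 1) * ξ / (2 * K * γ * a t ^ (γ + 1)))
      simpa using this
    have := h1.sub h2
    convert this using 1
    all_goals first | rfl | ring | (funext y; rfl)
  -- first part
  have main : ∀ x : ℝ, ∀ t ∈ D,
      deriv (fun τ => u x τ) t + u x t * deriv (fun y => u y t) x
        + (K * γ / (γ - 1)) * deriv (fun y => R y t) x = 0 := by
    intro x t ht
    have hA : 0 < a t := hapos t ht
    have hA0 : a t ≠ 0 := ne_of_gt hA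
    have hpow : 0 < a t ^ γ := Real.rpow_pos_of_pos hA γ
    have hpow0 : a t ^ γ ≠ 0 := ne_of_gt hpow
    have hadd : a t ^ (γ + 1) = a t ^ γ * a t := Real.rpow_add_one hA0 γ
    rw [hut x t ht, hux x t, (hRxd x t).deriv, hu, hEmden t ht, hadd]
    field_simp
    ring
  refine ⟨main, ?_⟩
  intro x t ht hpos
  have hA : 0 < a t := hapos t ht
  -- local positivity of R in space
  have hcont : Continuous (fun y => R y t) := by
    rw [hR]; fun_prop
  have hev : ∀ᶠ y in 𝓝 x, 0 < R y t :=
    continuousAt_const.eventually_lt hcont.continuousAt (by simpa using hpos : (0:ℝ) < R x t) |>.mono fun y hy => hy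
  set q : ℝ := γ / (γ - 1) with hq
  have heq : (fun y => K * ρ y t ^ γ) =ᶠ[𝓝 x] (fun y => K * R y t ^ q) := by
    filter_upwards [hev] with y hy
    rw [hρ]
    simp only
    rw [← Real.rpow_mul hy.le]
    congr 1
    field_simp
    ring
  set D' : ℝ := -((γ - 1) / (K * γ)) * (b' t + b t * (a' t / a t))
      - ((γ - 1) * ξ / (2 * K * γ * a t ^ (γ + 1))) * (2 * x) with hD'
  have hfd : HasDerivAt (fun y => R y t) D' x := hRxd x t
  have hrp : HasDerivAt (fun z : ℝ => z ^ q) (q * R x t ^ (q - 1)) (R x t) :=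
    Real.hasDerivAt_rpow_const (Or.inl (ne_of_gt hpos))
  have hderiv : deriv (fun y => K * ρ y t ^ γ) x = K * (q * R x t ^ (q - 1) * D') := by
    rw [heq.deriv_eq]
    have : HasDerivAt (fun y => K * R y t ^ q) (K * (q * R x t ^ (q - 1) * D')) x := by
      have := (hrp.comp x hfd).const_mul K
      simpa [Function.comp, mul_assoc] using this
    exact this.deriv
  have hq1 : q - 1 = 1 / (γ - 1) := by
    rw [hq]; field_simp
    ring
  have hρx : R x t ^ (q - 1) = ρ x t := by
    rw [hq1, hρ]
  have hS : deriv (fun τ => u x τ) t + u x t * deriv (fun y => u y t) x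
      = -(K * γ / (γ - 1)) * D' := by
    have h0 := main x t ht
    rw [hfd.deriv] at h0
    linarith
  rw [hderiv, hρx, hS, hq]
  field_simp
  ring
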